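/- Any two elements of the hierarchy Γ_k(X) have a least upper bound: for all elements (s,C) and (t,D) of Γ_k(X) there exists an element (u,E) of Γ_k(X) such that (s,C) ≤ (u,E) and (t,D) ≤ (u,E), and such that (u,E) ≤ (v,F) for every element (v,F) with (s,C) ≤ (v,F) and (t,D) ≤ (v,F). -/

import Mathlib

variable {Z : Type*} [MetricSpace Z]

/-- Vertex set `V_{s,k}(X)` of the degree-Rips complex: points of `X` having at
least `k` other points of `X` within distance `s`. -/
def drVertex (X : Set Z) (k : ℕ) (s : ℝ) : Set Z :=
  {x ∈ X | k ≤ {y ∈ X | y ≠ x ∧ dist x y ≤ s}.ncard}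

/-- The generating relation for components: two vertices at distance at most `s`. -/
def drStep (X : Set Z) (k : ℕ) (s : ℝ) (x y : Z) : Prop :=
  x ∈ drVertex X k s ∧ y ∈ drVertex X k s ∧ dist x y ≤ s

/-- `C` is a degree-Rips component (an element of `π₀ L_{s,k}(X)`): the class of
some vertex `x` under the equivalence relation generated by `drStep`. -/
def drComp (X : Set Z) (k : ℕ) (s : ℝ) (C : Set Z) : Prop :=
  ∃ x ∈ drVertex X k s, C = {y | Relation.ReflTransGen (drStep X k s) x y}

/-- `(t, C)` is a layer point of `Γ_k(X)`: it is an element of the hierarchy, and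
every element `(s, D) ≤ (t, C)` with `s < t` has `D` a proper subset of `C`. -/
def IsLayer (X : Set Z) (k : ℕ) (t : ℝ) (C : Set Z) : Prop :=
  0 ≤ t ∧ drComp X k t C ∧
    ∀ s D, 0 ≤ s → drComp X k s D → s < t → D ⊆ C → D ⊂ C

/-- `(t, C)` is a branch point of `Γ_k(X)`. -/
def IsBranch (X : Set Z) (k : ℕ) (t : ℝ) (C : Set Z) : Prop :=
  0 ≤ t ∧ drComp X k t C ∧
    ((∀ s D, 0 ≤ s → drComp X k s D → s < t → ¬D ⊆ C) ∨
      ∃ s₀, s₀ < t ∧ ∀ s, s₀ ≤ s → s < t →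
        ∃ D₁ D₂, drComp X k s D₁ ∧ drComp X k s D₂ ∧ D₁ ≠ D₂ ∧ D₁ ⊆ C ∧ D₂ ⊆ C)

/-- `(t, D)` is the maximal layer point below the element `(u, C)` of `Γ_k(X)`:
it is a layer point, `(t, D) ≤ (u, C)`, and every layer point below `(u, C)`
is below `(t, D)`. -/
def IsMaxLayerBelow (X : Set Z) (k : ℕ) (u : ℝ) (C : Set Z) (t : ℝ) (D : Set Z) : Prop :=
  IsLayer X k t D ∧ t ≤ u ∧ D ⊆ C ∧
    ∀ t' D', IsLayer X k t' D' → t' ≤ u → D' ⊆ C → t' ≤ t ∧ D' ⊆ D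

/-- `t` is a layer parameter of `X`. -/
def IsLayerParam (X : Set Z) (k : ℕ) (t : ℝ) : Prop :=
  ∃ C, IsLayer X k t C

/-- A stability map `θ : Y → X` (encoded as a map `Z → Z` carrying `Y` into `X`). -/
def IsStabilityMap (X Y : Set Z) (k : ℕ) (r : ℝ) (θ : Z → Z) : Prop :=
  (∀ y ∈ Y, θ y ∈ X) ∧
    ∀ s : ℝ, 0 ≤ s →
      (∀ y₁ y₂, y₁ ∈ drVertex Y k s → y₂ ∈ drVertex Y k s → dist y₁ y₂ ≤ s →
          θ y₁ ∈ drVertex X k (s + 2 * r) ∧ θ y₂ ∈ drVertex X k (s + 2 * r) ∧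
          dist (θ y₁) (θ y₂) ≤ s + 2 * r) ∧
      (∀ x ∈ drVertex X k s, ∃ C, drComp X k (s + 2 * r) C ∧ x ∈ C ∧ θ x ∈ C) ∧
      (∀ y ∈ drVertex Y k s, ∃ D, drComp Y k (s + 2 * r) D ∧ y ∈ D ∧ θ y ∈ D)

/-- Vertices of the degree-Rips complex at scale infinity: points with at least
`k` other points. -/
def drVertexInf (W : Set Z) (k : ℕ) : Set Z :=
  {w ∈ W | k ≤ {w' ∈ W | w' ≠ w}.ncard}

/-- Phase change numbers: distances between distinct vertices at scale infinity. -/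
def IsPhaseChange (W : Set Z) (k : ℕ) (t : ℝ) : Prop :=
  ∃ w₁ ∈ drVertexInf W k, ∃ w₂ ∈ drVertexInf W k, w₁ ≠ w₂ ∧ t = dist w₁ w₂


lemma drVertex_mono (X : Set Z) (hX : X.Finite) (k : ℕ) {u v : ℝ} (h : u ≤ v) :
    drVertex X k u ⊆ drVertex X k v := by
  rintro x ⟨hxX, hk⟩
  refine ⟨hxX, le_trans hk (Set.ncard_le_ncard ?_ (hX.subset fun y hy => hy.1))⟩
  rintro y ⟨hy, hne, hd⟩; exact ⟨hy, hne, hd.trans h⟩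

lemma drStep_mono (X : Set Z) (hX : X.Finite) (k : ℕ) {u v : ℝ} (h : u ≤ v)
    {x y : Z} (hst : drStep X k u x y) : drStep X k v x y :=
  ⟨drVertex_mono X hX k h hst.1, drVertex_mono X hX k h hst.2.1, hst.2.2.trans h⟩

lemma drStep_symm (X : Set Z) (k : ℕ) (s : ℝ) : Symmetric (drStep X k s) := by
  rintro x y ⟨hx, hy, hd⟩; exact ⟨hy, hx, by rwa [dist_comm]⟩

lemma drStep_reduce (X : Set Z) (k : ℕ) {u v : ℝ} (h : u ≤ v)
    (hd : ∀ a ∈ X, ∀ b ∈ X, dist a b ≤ v → dist a b ≤ u) :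
    ∀ x y, drStep X k v x y → drStep X k u x y := by
  have hV : drVertex X k v ⊆ drVertex X k u := by
    rintro x ⟨hxX, hk⟩
    refine ⟨hxX, le_trans hk (le_of_eq (congrArg Set.ncard ?_))⟩
    ext y
    constructor
    · rintro ⟨hy, hne, hdd⟩; exact ⟨hy, hne, hd x hxX y hy hdd⟩
    · rintro ⟨hy, hne, hdd⟩; exact ⟨hy, hne, hdd.trans h⟩
  rintro x y ⟨hx, hy, hdd⟩
  exact ⟨hV hx, hV hy, hd x hx.1 y hy.1 hdd⟩

/-- any two elements of `Γ_k(X)` have a least upper bound. -/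
theorem gamma_lub_exists (X : Set Z) (hXfin : X.Finite) (k : ℕ)
    (s t : ℝ) (C D : Set Z)
    (hs : 0 ≤ s) (hC : drComp X k s C) (ht : 0 ≤ t) (hD : drComp X k t D) :
    ∃ u E, 0 ≤ u ∧ drComp X k u E ∧
      (s ≤ u ∧ C ⊆ E) ∧ (t ≤ u ∧ D ⊆ E) ∧
      ∀ v F, 0 ≤ v → drComp X k v F →
        (s ≤ v ∧ C ⊆ F) → (t ≤ v ∧ D ⊆ F) → u ≤ v ∧ E ⊆ F := by
  classical
  obtain ⟨xC, hxCV, hCeq⟩ := hC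
  obtain ⟨xD, hxDV, hDeq⟩ := hD
  have hxCX : xC ∈ X := hxCV.1
  have hxDX : xD ∈ X := hxDV.1
  -- finite set of relevant parameters
  set T : Finset ℝ :=
    ((hXfin.prod hXfin).toFinset.image fun p => dist p.1 p.2) ∪ {s, t} with hT
  have hsT : s ∈ T := by simp [hT]
  have htT : t ∈ T := by simp [hT]
  have hdT : ∀ a ∈ X, ∀ b ∈ X, dist a b ∈ T := by
    intro a ha b hb
    apply Finset.mem_union_left
    exact Finset.mem_image.2 ⟨(a, b), by simp [Set.Finite.mem_toFinset, ha, hb], rfl⟩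
  have hTne : T.Nonempty := ⟨s, hsT⟩
  set v₁ : ℝ := T.max' hTne with hv₁
  have hsv₁ : s ≤ v₁ := T.le_max' s hsT
  have htv₁ : t ≤ v₁ := T.le_max' t htT
  have hstep₁ : drStep X k v₁ xC xD :=
    ⟨drVertex_mono X hXfin k hsv₁ hxCV, drVertex_mono X hXfin k htv₁ hxDV,
      T.le_max' _ (hdT xC hxCX xD hxDX)⟩
  set U : Finset ℝ :=
    T.filter (fun d => max s t ≤ d ∧ Relation.ReflTransGen (drStep X k d) xC xD) with hU
  have hv₁U : v₁ ∈ U := by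
    refine Finset.mem_filter.2 ⟨T.max'_mem hTne, max_le hsv₁ htv₁, ?_⟩
    exact Relation.ReflTransGen.single hstep₁
  have hUne : U.Nonempty := ⟨v₁, hv₁U⟩
  set u : ℝ := U.min' hUne with hu
  have huU : u ∈ U := U.min'_mem hUne
  obtain ⟨huT, hmstu, hRTGu⟩ := Finset.mem_filter.1 huU
  have hsu : s ≤ u := le_trans (le_max_left s t) hmstu
  have htu : t ≤ u := le_trans (le_max_right s t) hmstu
  -- minimality of u
  have hmin : ∀ v : ℝ, max s t ≤ v → Relation.ReflTransGen (drStep X k v) xC xD → u ≤ v := by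
    intro v hv hRTG
    have hsTv : s ∈ T.filter (· ≤ v) :=
      Finset.mem_filter.2 ⟨hsT, le_trans (le_max_left s t) hv⟩
    have hne : (T.filter (· ≤ v)).Nonempty := ⟨s, hsTv⟩
    set w : ℝ := (T.filter (· ≤ v)).max' hne with hw
    have hwv : w ≤ v := (Finset.mem_filter.1 ((T.filter (· ≤ v)).max'_mem hne)).2
    have hmax : ∀ d ∈ T, d ≤ v → d ≤ w := fun d hd hdv =>
      (T.filter (· ≤ v)).le_max' d (Finset.mem_filter.2 ⟨hd, hdv⟩)
    have hsw : s ≤ w := hmax s hsT (le_trans (le_max_left s t) hv)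
    have htw : t ≤ w := hmax t htT (le_trans (le_max_right s t) hv)
    have hred : ∀ x y, drStep X k v x y → drStep X k w x y :=
      drStep_reduce X k hwv (fun a ha b hb hab => hmax _ (hdT a ha b hb) hab)
    have hwU : w ∈ U := by
      refine Finset.mem_filter.2 ⟨(Finset.mem_filter.1 ((T.filter (· ≤ v)).max'_mem hne)).1,
        max_le hsw htw, Relation.ReflTransGen.mono hred _ _ hRTG⟩
    exact le_trans (U.min'_le w hwU) hwv
  -- the candidate
  refine ⟨u, {y | Relation.ReflTransGen (drStep X k u) xC y}, le_trans hs hsu,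
    ⟨xC, drVertex_mono X hXfin k hsu hxCV, rfl⟩, ⟨hsu, ?_⟩, ⟨htu, ?_⟩, ?_⟩
  · intro y hy
    rw [hCeq] at hy
    exact Relation.ReflTransGen.mono (fun a b hab => drStep_mono X hXfin k hsu hab) _ _ hy
  · intro y hy
    rw [hDeq] at hy
    exact hRTGu.trans (Relation.ReflTransGen.mono (fun a b hab => drStep_mono X hXfin k htu hab) _ _ hy)
  · rintro v F h0v ⟨x₀, hx₀V, rfl⟩ ⟨hsv, hCF⟩ ⟨htv, hDF⟩
    have hxCF : Relation.ReflTransGen (drStep X k v) x₀ xC :=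
      hCF (by rw [hCeq]; exact Relation.ReflTransGen.refl)
    have hxDF : Relation.ReflTransGen (drStep X k v) x₀ xD :=
      hDF (by rw [hDeq]; exact Relation.ReflTransGen.refl)
    have hsymm : Symmetric (Relation.ReflTransGen (drStep X k v)) :=
      by haveI : Std.Symm (drStep X k v) := ⟨drStep_symm X k v⟩; exact fun a b h => Std.Symm.symm a b h
    have hCD : Relation.ReflTransGen (drStep X k v) xC xD := (hsymm hxCF).trans hxDF
    refine ⟨hmin v (max_le hsv htv) hCD, ?_⟩
    intro y hy
    exact hxCF.trans (Relation.ReflTransGen.mono (fun a b hab =>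
      drStep_mono X hXfin k (hmin v (max_le hsv htv) hCD) hab) _ _ hy)
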